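/- Let A and J be N×N complex matrices such that Aᴴ·J + J·A = 0, and let p be a polynomial with real coefficients that is odd, i.e. p(−x) = −p(x) for all x. Then p(A) also belongs to the quadratic Lie algebra of J: (p(A))ᴴ·J + J·p(A) = 0. -/
import Mathlib


open Matrix Polynomial

lemma coeff_comp_neg_X' (p : Polynomial ℝ) (n : ℕ) :
    (p.comp (-X)).coeff n = (-1 : ℝ)^n * p.coeff n := by
  induction p using Polynomial.induction_on' with
  | add f g hf hg => simp [add_comp, hf, hg, mul_add]
  | monomial k a =>
    have hx : (-X : Polynomial ℝ)^k = C ((-1:ℝ)^k) * X^k := by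
      rw [← neg_one_mul, mul_pow, ← C_1, ← C_neg, ← C_pow]
    rw [monomial_comp, hx, ← mul_assoc, ← C_mul]
    simp only [coeff_C_mul, coeff_X_pow, coeff_monomial, mul_ite, mul_one, mul_zero]
    rcases eq_or_ne k n with h | h
    · subst h; simp; ring
    · simp [h, Ne.symm h]
theorem odd_poly_mem_quadratic_lie_algebra (N : ℕ) (A J : Matrix (Fin N) (Fin N) ℂ)
    (hA : Aᴴ * J + J * A = 0) (p : Polynomial ℝ)
    (hodd : ∀ x : ℝ, p.eval (-x) = -p.eval x) :
    (Polynomial.aeval A p)ᴴ * J + J * Polynomial.aeval A p = 0 := by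
  have h1 : Aᴴ * J = -(J * A) := eq_neg_of_add_eq_zero_left hA
  -- even coefficients vanish
  have hc : p.comp (-X) = -p := by
    apply Polynomial.funext
    intro x
    simp [eval_comp, hodd]
  have hcoeff : ∀ n : ℕ, Even n → p.coeff n = 0 := by
    intro n hn
    have := congrArg (fun q => q.coeff n) hc
    simp only [coeff_comp_neg_X' p n, coeff_neg, hn.neg_one_pow, one_mul] at this
    linarith
  -- key power identity
  have hpow : ∀ n : ℕ, (Aᴴ)^n * J = ((-1:ℂ)^n) • (J * A^n) := by
    intro n
    induction n with
    | zero => simp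
    | succ n ih =>
      rw [pow_succ, mul_assoc, h1, mul_neg, ← mul_assoc, ih, smul_mul_assoc]
      simp [pow_succ, mul_smul, mul_assoc]
  rw [Polynomial.aeval_eq_sum_range]
  rw [conjTranspose_sum, Finset.sum_mul, Finset.mul_sum, ← Finset.sum_add_distrib]
  apply Finset.sum_eq_zero
  intro i _
  rcases Nat.even_or_odd i with he | ho
  · simp [hcoeff i he]
  · rw [conjTranspose_smul, conjTranspose_pow, star_trivial, smul_mul_assoc, hpow,
      ho.neg_one_pow, neg_one_smul, mul_smul_comm, smul_neg, neg_add_cancel]
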